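/- Let K be a field, let F ∈ K[X,Y] be a homogeneous polynomial of degree d, and let γ = [[a, b], [c, e]] ∈ GL₂(K). Define G ∈ K[X,Y] by G(X,Y) = F(aX + bY, cX + eY). Then for every (x, y) ∈ K², the vector identity (G_Y(x,y), −G_X(x,y)) = (det γ) · γ⁻¹ · (F_Y(γ·(x,y)), −F_X(γ·(x,y))) holds, where γ·(x,y) = (ax + by, cx + ey). Consequently, on P¹ one has γ⁻¹ ∘ φ_F ∘ γ = φ_G, i.e. the family of maps of the form φ_F is invariant under conjugation by PGL₂. -/

import Mathlib

open MvPolynomial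

lemma chain_rule_fin2 {K : Type*} [CommRing K]
    (g : Fin 2 → MvPolynomial (Fin 2) K) (F : MvPolynomial (Fin 2) K) (i : Fin 2) :
    pderiv i (aeval g F)
      = aeval g (pderiv 0 F) * pderiv i (g 0) + aeval g (pderiv 1 F) * pderiv i (g 1) := by
  induction F using MvPolynomial.induction_on with
  | C r => simp
  | add p q hp hq => simp only [map_add, hp, hq]; ring
  | mul_X p n hp =>
      fin_cases n <;>
      · simp only [map_mul, aeval_X, pderiv_mul, hp, map_add, pderiv_X, Pi.single_apply]
        norm_num [Fin.ext_iff]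
        ring

/-- **The family `φ_F = (F_Y, −F_X)` is invariant under conjugation by `PGL₂`.**
For `F ∈ K[X,Y]` homogeneous of degree `d`, `γ = [[a,b],[c,e]] ∈ GL₂(K)` and
`G(X,Y) = F(aX + bY, cX + eY)`, for every `v = (x,y) ∈ K²` one has the vector identity
`(G_Y(v), −G_X(v)) = (det γ) · γ⁻¹ · (F_Y(γ·v), −F_X(γ·v))`,
which says exactly that `γ⁻¹ ∘ φ_F ∘ γ = φ_G` on `P¹`. -/
theorem phiF_family_PGL2_invariant
    {K : Type*} [Field K] (d : ℕ) (F : MvPolynomial (Fin 2) K) (hF : F.IsHomogeneous d)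
    (a b c e : K) (hdet : a * e - b * c ≠ 0)
    (G : MvPolynomial (Fin 2) K)
    (hG : G = aeval ![C a * X 0 + C b * X 1, C c * X 0 + C e * X 1] F) :
    ∀ v : Fin 2 → K,
      ![eval v (pderiv 1 G), -(eval v (pderiv 0 G))]
        = (a * e - b * c) •
            (!![a, b; c, e])⁻¹.mulVec
              ![eval ((!![a, b; c, e]).mulVec v) (pderiv 1 F),
                -(eval ((!![a, b; c, e]).mulVec v) (pderiv 0 F))] := by
  intro v
  set g : Fin 2 → MvPolynomial (Fin 2) K :=
    ![C a * X 0 + C b * X 1, C c * X 0 + C e * X 1] with hg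
  have hw : (!![a, b; c, e]).mulVec v = fun j => eval v (g j) := by
    funext j
    fin_cases j <;>
      simp [hg, Matrix.mulVec, dotProduct, Fin.sum_univ_two]
  have heval : ∀ P : MvPolynomial (Fin 2) K,
      eval ((!![a, b; c, e]).mulVec v) P = eval v (aeval g P) := by
    intro P
    calc eval ((!![a, b; c, e]).mulVec v) P
        = aeval (fun j => aeval v (g j)) P := by rw [hw]; rfl
      _ = aeval v (bind₁ g P) := (aeval_bind₁ v g P).symm
      _ = eval v (aeval g P) := by rw [aeval_eq_bind₁]; rfl
  have hg00 : pderiv (0 : Fin 2) (g 0) = C a := by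
    simp [hg, pderiv_X, Pi.single_apply]
  have hg01 : pderiv (1 : Fin 2) (g 0) = C b := by
    simp [hg, pderiv_X, Pi.single_apply]
  have hg10 : pderiv (0 : Fin 2) (g 1) = C c := by
    simp [hg, pderiv_X, Pi.single_apply]
  have hg11 : pderiv (1 : Fin 2) (g 1) = C e := by
    simp [hg, pderiv_X, Pi.single_apply]
  set p0 := eval ((!![a, b; c, e]).mulVec v) (pderiv 0 F) with hp0
  set p1 := eval ((!![a, b; c, e]).mulVec v) (pderiv 1 F) with hp1
  have e0 : eval v (pderiv 0 G) = p0 * a + p1 * c := by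
    rw [hG, chain_rule_fin2, hg00, hg10, hp0, hp1, heval, heval]
    simp
  have e1 : eval v (pderiv 1 G) = p0 * b + p1 * e := by
    rw [hG, chain_rule_fin2, hg01, hg11, hp0, hp1, heval, heval]
    simp
  funext i
  fin_cases i <;>
  · simp [e0, e1, Matrix.inv_def, Matrix.adjugate_fin_two_of, Matrix.det_fin_two_of,
      Ring.inverse_eq_inv', Matrix.mulVec, dotProduct, Fin.sum_univ_two]
    field_simp
    rw [eq_div_iff (by contrapose! hdet; linear_combination hdet)] <;> ring
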